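/- Let $Z$ be a normed space, $T>0$, $N\in\mathbb{N}$ with $N\ge 1$, $\Delta t = T/N$, and $\{z^n\}_{n=0}^N \subset Z$. Define the difference quotients $\partial z^n = (z^n - z^{n-1})/\Delta t$ for $n=1,\dots,N$. Then $\max_{0\le k\le N} \|z^k\|_Z^2 \le \frac{6\max\{1,T^2\}}{2N+1}\left( \sum_{n=0}^N \|z^n\|_Z^2 + \sum_{n=1}^N \|\partial z^n\|_Z^2 \right)$. -/

import Mathlib

lemma tele_aux {Z : Type*} [AddCommGroup Z] (z : ℕ → Z) :
    ∀ k j, j ≤ k → ∑ n ∈ Finset.Icc (j+1) k, (z n - z (n-1)) = z k - z j := by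
  intro k
  induction k with
  | zero =>
    intro j hj
    interval_cases j
    simp
  | succ k ih =>
    intro j hj
    rcases Nat.lt_or_ge j (k+1) with h | h
    · have hj' : j ≤ k := Nat.lt_succ_iff.mp h
      have hins : Finset.Icc (j+1) (k+1) = insert (k+1) (Finset.Icc (j+1) k) := by
        ext x
        simp only [Finset.mem_Icc, Finset.mem_insert]
        omega
      rw [hins, Finset.sum_insert (by simp [Finset.mem_Icc]), ih j hj']
      simp
    · have hjk : j = k+1 := le_antisymm hj h
      subst hjk
      rw [Finset.Icc_eq_empty (by omega)]
      simp

set_option maxHeartbeats 1000000 in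
/-- Discrete time Sobolev inequality (Lemma 3.2). -/
theorem stmt_0 {Z : Type*} [NormedAddCommGroup Z] [NormedSpace ℝ Z]
    (T : ℝ) (hT : 0 < T) (N : ℕ) (hN : 1 ≤ N) (Δt : ℝ) (hΔt : Δt = T / N)
    (z : ℕ → Z) (dz : ℕ → Z)
    (hdz : ∀ n, 1 ≤ n → n ≤ N → dz n = (Δt)⁻¹ • (z n - z (n - 1))) :
    ∀ k ≤ N, ‖z k‖ ^ 2 ≤ 6 * max 1 (T ^ 2) / (2 * (N : ℝ) + 1) *
      ((∑ n ∈ Finset.range (N + 1), ‖z n‖ ^ 2) +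
        ∑ n ∈ Finset.Icc 1 N, ‖dz n‖ ^ 2) := by
  intro k hk
  set n : ℝ := (N : ℝ) with hn
  have hn1 : (1:ℝ) ≤ n := by rw [hn]; exact_mod_cast hN
  have hn0 : (0:ℝ) < n := by linarith
  have hΔt0 : 0 < Δt := by rw [hΔt]; exact div_pos hT hn0
  set M : ℝ := max 1 (T ^ 2) with hM
  have hM1 : (1:ℝ) ≤ M := le_max_left _ _
  have hMT : T ^ 2 ≤ M := le_max_right _ _
  set S1 : ℝ := ∑ m ∈ Finset.range (N + 1), ‖z m‖ ^ 2 with hS1def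
  set S2 : ℝ := ∑ m ∈ Finset.Icc 1 N, ‖dz m‖ ^ 2 with hS2def
  have hS1 : 0 ≤ S1 := Finset.sum_nonneg fun _ _ => by positivity
  have hS2 : 0 ≤ S2 := Finset.sum_nonneg fun _ _ => by positivity
  set a : ℝ := ‖z k‖ ^ 2 with ha
  clear_value n M S1 S2 a
  -- step equation
  have hstep : ∀ m, 1 ≤ m → m ≤ N → z m - z (m-1) = Δt • dz m := by
    intro m h1 h2
    rw [hdz m h1 h2, smul_smul, mul_inv_cancel₀ hΔt0.ne', one_smul]
  set C : ℝ := ∑ m ∈ Finset.Icc 1 N, ‖dz m‖ with hC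
  have hC0 : 0 ≤ C := Finset.sum_nonneg fun _ _ => norm_nonneg _
  set B : ℝ := Δt * C with hB
  have hB0 : 0 ≤ B := mul_nonneg hΔt0.le hC0
  -- telescoping bound for j ≤ k' ≤ N
  have htel : ∀ j k', j ≤ k' → k' ≤ N → ‖z k' - z j‖ ≤ B := by
    intro j k' hjk hk'
    rw [← tele_aux z k' j hjk]
    calc ‖∑ m ∈ Finset.Icc (j+1) k', (z m - z (m-1))‖
        ≤ ∑ m ∈ Finset.Icc (j+1) k', ‖z m - z (m-1)‖ := norm_sum_le _ _
      _ = ∑ m ∈ Finset.Icc (j+1) k', Δt * ‖dz m‖ := by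
          refine Finset.sum_congr rfl fun m hm => ?_
          rw [Finset.mem_Icc] at hm
          rw [hstep m (by omega) (by omega), norm_smul, Real.norm_of_nonneg hΔt0.le]
      _ ≤ ∑ m ∈ Finset.Icc 1 N, Δt * ‖dz m‖ := by
          refine Finset.sum_le_sum_of_subset_of_nonneg ?_ fun m _ _ => by positivity
          intro m hm
          rw [Finset.mem_Icc] at hm ⊢
          omega
      _ = B := by rw [hB, Finset.mul_sum]
  have hdiff : ∀ j ≤ N, ‖z k - z j‖ ≤ B := by
    intro j hj
    rcases le_total j k with h | h
    · exact htel j k h hk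
    · rw [norm_sub_rev]; exact htel k j h hj
  -- Cauchy-Schwarz
  have hCS : C ^ 2 ≤ n * S2 := by
    have := sq_sum_le_card_mul_sum_sq (s := Finset.Icc 1 N) (f := fun m => ‖dz m‖)
    rw [Nat.card_Icc] at this
    simp only [Nat.add_sub_cancel] at this
    rw [hC, hS2def, hn]
    exact_mod_cast this
  have hB2 : n * B ^ 2 ≤ T ^ 2 * S2 := by
    have hΔsq : n * Δt ^ 2 * n = T ^ 2 := by
      rw [hΔt]; field_simp
    calc n * B ^ 2 = (n * Δt ^ 2) * C ^ 2 := by rw [hB]; ring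
      _ ≤ (n * Δt ^ 2) * (n * S2) := by
          apply mul_le_mul_of_nonneg_left hCS (by positivity)
      _ = T ^ 2 * S2 := by rw [← hΔsq]; ring
  -- per-j bound
  have hperj : ∀ j ∈ Finset.range (N+1), n * a ≤ 2 * (n * ‖z j‖ ^ 2) + 2 * (T ^ 2 * S2) := by
    intro j hj
    rw [Finset.mem_range] at hj
    have hjN : j ≤ N := by omega
    have hd := hdiff j hjN
    have habs : ‖z k‖ ≤ ‖z j‖ + ‖z k - z j‖ := by
      calc ‖z k‖ = ‖z j + (z k - z j)‖ := by congr 1; abel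
        _ ≤ ‖z j‖ + ‖z k - z j‖ := norm_add_le _ _
    have haux : a ≤ 2 * ‖z j‖ ^ 2 + 2 * B ^ 2 := by
      nlinarith [sq_nonneg (‖z j‖ - ‖z k - z j‖), norm_nonneg (z k - z j), norm_nonneg (z j),
        norm_nonneg (z k), mul_le_mul hd hd (norm_nonneg _) hB0]
    nlinarith [mul_le_mul_of_nonneg_left haux hn0.le, hB2]
  -- sum over j
  have hsum := Finset.sum_le_sum hperj
  rw [Finset.sum_const, Finset.card_range] at hsum
  have hsum' : (n+1) * (n * a) ≤ 2 * (n * S1) + (n+1) * (2 * (T ^ 2 * S2)) := by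
    have hcast : ((N+1 : ℕ) : ℝ) = n + 1 := by push_cast [hn]; ring
    calc (n+1) * (n * a) = ((N+1 : ℕ) : ℝ) * (n * a) := by rw [hcast]
      _ = ((N+1 : ℕ)) • (n * a) := by rw [nsmul_eq_mul]
      _ ≤ ∑ j ∈ Finset.range (N+1), (2 * (n * ‖z j‖ ^ 2) + 2 * (T ^ 2 * S2)) := hsum
      _ = 2 * (n * S1) + (n+1) * (2 * (T ^ 2 * S2)) := by
          rw [Finset.sum_add_distrib, Finset.sum_const, Finset.card_range, nsmul_eq_mul, hcast,
            hS1def, Finset.mul_sum]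
          congr 1
          · rw [← Finset.mul_sum]
  -- coefficient inequalities
  have h2n1 : (0:ℝ) < 2*n+1 := by linarith
  have hstep2 : a ≤ 2/(n+1) * S1 + 2*T^2/n * S2 := by
    rw [← mul_le_mul_iff_of_pos_right (show (0:ℝ) < n*(n+1) by positivity)]
    have e : (2/(n+1) * S1 + 2*T^2/n * S2) * (n*(n+1)) = 2*(n*S1) + (n+1)*(2*(T^2*S2)) := by
      field_simp
    rw [e]
    linarith [hsum']
  have h1 : 2/(n+1) ≤ 6*M/(2*n+1) := by
    rw [div_le_div_iff₀ (by linarith) h2n1]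
    nlinarith [mul_le_mul_of_nonneg_right hM1 hn0.le]
  have h2 : 2*T^2/n ≤ 6*M/(2*n+1) := by
    rw [div_le_div_iff₀ hn0 h2n1]
    nlinarith [mul_nonneg (sub_nonneg.2 hMT) h2n1.le,
      mul_nonneg (le_trans zero_le_one hM1) (sub_nonneg.2 hn1)]
  calc a ≤ 2/(n+1) * S1 + 2*T^2/n * S2 := hstep2
    _ ≤ 6*M/(2*n+1) * S1 + 6*M/(2*n+1) * S2 := by
        have := mul_le_mul_of_nonneg_right h1 hS1
        have := mul_le_mul_of_nonneg_right h2 hS2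
        linarith
    _ = 6*M/(2*n+1) * (S1 + S2) := by ring
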